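/- arXiv:1302.0591 — 2 statements merged into one kernel-verified Lean document; each statement's English description precedes it below -/
import Mathlib

section
/- Let F : ℝ × ℝ → ℝ with F(G(t), t) = 0 for all t, where G, φ : ℝ → ℝ are C¹, f : ℝ → ℝ is nowhere zero, and H' = 1/f. If q : ℝ² → ℝ is differentiable and satisfies H(x)·G'(q(x,y)) + y = φ'(q(x,y)) for all (x,y), then u(x,y) = H(x)·G(q(x,y)) + y·q(x,y) − φ(q(x,y)) satisfies F(f(x)·u_x(x,y), u_y(x,y)) = 0 for all (x,y). -/
theorem stmt_5 (F : ℝ × ℝ → ℝ) (f G φ H : ℝ → ℝ)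
    (hG : ContDiff ℝ 1 G) (hφ : ContDiff ℝ 1 φ)
    (hFG : ∀ t : ℝ, F (G t, t) = 0)
    (hf : ∀ x : ℝ, f x ≠ 0)
    (hH : ∀ x : ℝ, HasDerivAt H (1 / f x) x)
    (q : ℝ × ℝ → ℝ) (hq : Differentiable ℝ q)
    (hcond : ∀ x y : ℝ, H x * deriv G (q (x, y)) + y = deriv φ (q (x, y)))
    (u : ℝ × ℝ → ℝ)
    (hu : ∀ x y : ℝ, u (x, y) = H x * G (q (x, y)) + y * q (x, y) - φ (q (x, y))) :
    ∀ x y : ℝ,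
      F (f x * deriv (fun x' => u (x', y)) x, deriv (fun y' => u (x, y')) y) = 0 := by
  intro x y
  set t := q (x, y) with ht
  have hqd : DifferentiableAt ℝ q (x, y) := hq _
  have hGt : HasDerivAt G (deriv G t) t := (hG.differentiable one_ne_zero t).hasDerivAt
  have hφt : HasDerivAt φ (deriv φ t) t := (hφ.differentiable one_ne_zero t).hasDerivAt
  have hqx : HasDerivAt (fun x' => q (x', y)) (deriv (fun x' => q (x', y)) x) x := by
    apply DifferentiableAt.hasDerivAt
    exact hqd.comp x (differentiableAt_id.prodMk (differentiableAt_const y))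
  set qx := deriv (fun x' => q (x', y)) x
  have hux : HasDerivAt (fun x' => u (x', y))
      ((1 / f x) * G t + (H x * deriv G t + y - deriv φ t) * qx) x := by
    have he : (fun x' => u (x', y))
        = fun x' => H x' * G (q (x', y)) + y * q (x', y) - φ (q (x', y)) :=
      funext fun x' => hu x' y
    rw [he]
    have h1 : HasDerivAt (fun x' => H x' * G (q (x', y)))
        ((1 / f x) * G t + H x * (deriv G t * qx)) x :=
      (hH x).mul (hGt.comp x hqx)
    have h2 : HasDerivAt (fun x' => y * q (x', y)) (y * qx) x := hqx.const_mul y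
    have h3 : HasDerivAt (fun x' => φ (q (x', y))) (deriv φ t * qx) x := hφt.comp x hqx
    have := (h1.add h2).sub h3
    exact this.congr_deriv (by ring)
  have hux' : deriv (fun x' => u (x', y)) x = (1 / f x) * G t := by
    rw [hux.deriv, ← hcond x y]; ring
  have hqy : HasDerivAt (fun y' => q (x, y')) (deriv (fun y' => q (x, y')) y) y := by
    apply DifferentiableAt.hasDerivAt
    exact hqd.comp y ((differentiableAt_const x).prodMk differentiableAt_id)
  set qy := deriv (fun y' => q (x, y')) y
  have huy : HasDerivAt (fun y' => u (x, y'))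
      (t + (H x * deriv G t + y - deriv φ t) * qy) y := by
    have he : (fun y' => u (x, y'))
        = fun y' => H x * G (q (x, y')) + y' * q (x, y') - φ (q (x, y')) :=
      funext fun y' => hu x y'
    rw [he]
    have h1 : HasDerivAt (fun y' => H x * G (q (x, y'))) (H x * (deriv G t * qy)) y :=
      (hGt.comp y hqy).const_mul (H x)
    have h2 : HasDerivAt (fun y' => y' * q (x, y')) (1 * t + y * qy) y :=
      (hasDerivAt_id y).mul hqy
    have h3 : HasDerivAt (fun y' => φ (q (x, y'))) (deriv φ t * qy) y := hφt.comp y hqy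
    have := (h1.add h2).sub h3
    exact this.congr_deriv (by ring)
  have huy' : deriv (fun y' => u (x, y')) y = t := by
    rw [huy.deriv, ← hcond x y]; ring
  rw [hux', huy']
  have hfx : f x * (1 / f x * G t) = G t := by
    field_simp
    exact mul_div_cancel_left₀ _ (hf x)
  rw [hfx]
  exact hFG t
end

section
/- Let V, a : ℝ → ℝ be continuously differentiable with a(x) > 0 for all x, and let F : ℝ × ℝ → ℝ be continuously differentiable. Let q : ℝ × ℝ → ℝ be differentiable, and suppose that for all (x,t): q(x,t) − V(x) > 0, the partial derivative ∂F/∂q(x, q(x,t)) = t + x/(2·√(a(x)·(q(x,t) − V(x)))), and ∂F/∂x(x, q(x,t)) = x·(a'(x)·V(x) − a(x)·V'(x) − q(x,t)·a'(x)) / (2·a(x)·√(a(x)·(q(x,t) − V(x)))). Define S(x,t) = x·√((q(x,t) − V(x))/a(x)) + q(x,t)·t − F(x, q(x,t)). Then S satisfies the Hamilton–Jacobi equation a(x)·(S_x)² + V(x) = S_t at every point, with S_x(x,t) = √((q(x,t) − V(x))/a(x)) and S_t(x,t) = q(x,t). -/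
set_option maxHeartbeats 1000000

theorem stmt_15 (V a : ℝ → ℝ) (hV : ContDiff ℝ 1 V) (ha : ContDiff ℝ 1 a)
    (hapos : ∀ x : ℝ, 0 < a x)
    (F : ℝ × ℝ → ℝ) (hF : ContDiff ℝ 1 F)
    (q : ℝ × ℝ → ℝ) (hq : Differentiable ℝ q)
    (hqV : ∀ x t : ℝ, 0 < q (x, t) - V x)
    (hFq : ∀ x t : ℝ,
      deriv (fun s => F (x, s)) (q (x, t))
        = t + x / (2 * Real.sqrt (a x * (q (x, t) - V x))))
    (hFx : ∀ x t : ℝ,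
      deriv (fun x' => F (x', q (x, t))) x
        = x * (deriv a x * V x - a x * deriv V x - q (x, t) * deriv a x)
            / (2 * a x * Real.sqrt (a x * (q (x, t) - V x))))
    (S : ℝ × ℝ → ℝ)
    (hS : ∀ x t : ℝ,
      S (x, t) = x * Real.sqrt ((q (x, t) - V x) / a x) + q (x, t) * t - F (x, q (x, t))) :
    ∀ x t : ℝ,
      deriv (fun x' => S (x', t)) x = Real.sqrt ((q (x, t) - V x) / a x) ∧
      deriv (fun t' => S (x, t')) t = q (x, t) ∧
      a x * (deriv (fun x' => S (x', t)) x) ^ 2 + V x = deriv (fun t' => S (x, t')) t := by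
  intro x t
  have hax : 0 < a x := hapos x
  have hax0 : a x ≠ 0 := ne_of_gt hax
  have hcv : 0 < q (x, t) - V x := hqV x t
  set c : ℝ := q (x, t) with hc
  set r : ℝ := Real.sqrt (a x * (c - V x)) with hrdef
  have hrpos : 0 < r := Real.sqrt_pos.2 (by positivity)
  have hr0 : r ≠ 0 := ne_of_gt hrpos
  have hsa : Real.sqrt (a x) ≠ 0 := by positivity
  -- sqrt((c - V x)/a x) = r / a x
  have hs : Real.sqrt ((c - V x) / a x) = r / a x := by
    have h1 : (r / a x) ^ 2 = (c - V x) / a x := by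
      rw [div_pow, hrdef, Real.sq_sqrt (by positivity : (0:ℝ) ≤ a x * (c - V x))]
      field_simp
    have h2 : (0:ℝ) ≤ r / a x := by positivity
    rw [← Real.sqrt_sq h2, h1]
  -- fderivs
  set Dq := fderiv ℝ q (x, t) with hDq
  have hqF : HasFDerivAt q Dq (x, t) := (hq (x, t)).hasFDerivAt
  have hFd : Differentiable ℝ F := hF.differentiable one_ne_zero
  set DF := fderiv ℝ F (x, c) with hDF
  have hFF : HasFDerivAt F DF (x, c) := (hFd (x, c)).hasFDerivAt
  -- slice derivatives of q
  have hqx : HasDerivAt (fun x' => q (x', t)) (Dq (1, 0)) x :=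
    hqF.comp_hasDerivAt x (HasDerivAt.prodMk (hasDerivAt_id x) (hasDerivAt_const x t))
  have hqt : HasDerivAt (fun t' => q (x, t')) (Dq (0, 1)) t :=
    hqF.comp_hasDerivAt t (HasDerivAt.prodMk (hasDerivAt_const t x) (hasDerivAt_id t))
  set qx := Dq (1, 0) with hqxdef
  set qt := Dq (0, 1) with hqtdef
  -- partial derivatives of F
  have hFq1 : HasDerivAt (fun s => F (x, s)) (DF (0, 1)) c :=
    hFF.comp_hasDerivAt c (HasDerivAt.prodMk (hasDerivAt_const c x) (hasDerivAt_id c))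
  have eFq : DF (0, 1) = t + x / (2 * r) := by
    rw [← hFq1.deriv]; exact hFq x t
  have hFx1 : HasDerivAt (fun x' => F (x', c)) (DF (1, 0)) x :=
    hFF.comp_hasDerivAt x (HasDerivAt.prodMk (hasDerivAt_id x) (hasDerivAt_const x c))
  have eFx : DF (1, 0)
      = x * (deriv a x * V x - a x * deriv V x - c * deriv a x) / (2 * a x * r) := by
    rw [← hFx1.deriv]; exact hFx x t
  set a' := deriv a x with ha'def
  set V' := deriv V x with hV'def
  have haD : HasDerivAt a a' x := (ha.differentiable one_ne_zero x).hasDerivAt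
  have hVD : HasDerivAt V V' x := (hV.differentiable one_ne_zero x).hasDerivAt
  -- x-direction
  have hwD : HasDerivAt (fun x' => (q (x', t) - V x') / a x')
      (((qx - V') * a x - (c - V x) * a') / (a x) ^ 2) x := (hqx.sub hVD).div haD hax0
  have hsqx : HasDerivAt (fun x' => Real.sqrt ((q (x', t) - V x') / a x'))
      ((((qx - V') * a x - (c - V x) * a') / (a x) ^ 2)
        / (2 * Real.sqrt ((c - V x) / a x))) x :=
    hwD.sqrt (by positivity)
  have hFcomp : HasDerivAt (fun x' => F (x', q (x', t))) (DF (1, qx)) x :=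
    hFF.comp_hasDerivAt x (HasDerivAt.prodMk (hasDerivAt_id x) hqx)
  have hsplitx : DF (1, qx) = DF (1, 0) + qx * DF (0, 1) := by
    have h1 : ((1 : ℝ), qx) = (1, 0) + qx • ((0 : ℝ), (1 : ℝ)) := by
      simp [Prod.ext_iff]
    rw [h1, map_add, map_smul, smul_eq_mul]
  have hSx : HasDerivAt (fun x' => x' * Real.sqrt ((q (x', t) - V x') / a x')
        + q (x', t) * t - F (x', q (x', t)))
      (1 * Real.sqrt ((c - V x) / a x)
        + x * ((((qx - V') * a x - (c - V x) * a') / (a x) ^ 2)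
          / (2 * Real.sqrt ((c - V x) / a x)))
        + qx * t - DF (1, qx)) x :=
    (((hasDerivAt_id x).mul hsqx).add (hqx.mul_const t)).sub hFcomp
  have hfunx : (fun x' => S (x', t))
      = fun x' => x' * Real.sqrt ((q (x', t) - V x') / a x')
          + q (x', t) * t - F (x', q (x', t)) := funext fun x' => hS x' t
  have goalx : deriv (fun x' => S (x', t)) x = Real.sqrt ((c - V x) / a x) := by
    rw [hfunx, hSx.deriv, hsplitx, eFx, eFq, hs]
    field_simp
    ring
  -- t-direction
  have hwtD : HasDerivAt (fun t' => (q (x, t') - V x) / a x) (qt / a x) t :=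
    (hqt.sub_const (V x)).div_const (a x)
  have hsqt : HasDerivAt (fun t' => Real.sqrt ((q (x, t') - V x) / a x))
      ((qt / a x) / (2 * Real.sqrt ((c - V x) / a x))) t :=
    hwtD.sqrt (by positivity)
  have hFcompt : HasDerivAt (fun t' => F (x, q (x, t'))) (DF (0, qt)) t :=
    hFF.comp_hasDerivAt t (HasDerivAt.prodMk (hasDerivAt_const t x) hqt)
  have hsplitt : DF (0, qt) = qt * DF (0, 1) := by
    have h1 : ((0 : ℝ), qt) = qt • ((0 : ℝ), (1 : ℝ)) := by simp [Prod.ext_iff]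
    rw [h1, map_smul, smul_eq_mul]
  have hSt : HasDerivAt (fun t' => x * Real.sqrt ((q (x, t') - V x) / a x)
        + q (x, t') * t' - F (x, q (x, t')))
      (x * ((qt / a x) / (2 * Real.sqrt ((c - V x) / a x)))
        + (qt * t + c * 1) - DF (0, qt)) t :=
    ((hsqt.const_mul x).add (hqt.mul (hasDerivAt_id t))).sub hFcompt
  have hfunt : (fun t' => S (x, t'))
      = fun t' => x * Real.sqrt ((q (x, t') - V x) / a x)
          + q (x, t') * t' - F (x, q (x, t')) := funext fun t' => hS x t'
  have goalt : deriv (fun t' => S (x, t')) t = c := by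
    rw [hfunt, hSt.deriv, hsplitt, eFq, hs]
    field_simp
    ring
  refine ⟨goalx, goalt, ?_⟩
  rw [goalx, goalt, hs]
  have hr2 : r ^ 2 = a x * (c - V x) := Real.sq_sqrt (by positivity)
  field_simp
  nlinarith [hr2]
end
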